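/- There is a constant C such that for all integers n ≥ 2, ‖e_n‖_{L^3(B)} ≤ C (log n)^{1/3}, where e_n(x) = sin(nπ|x|)/|x| on the unit ball B ⊂ ℝ³. -/

import Mathlib

open Real MeasureTheory

noncomputable abbrev E3 := EuclideanSpace ℝ (Fin 3)

/-- The open unit ball in `ℝ³`. -/
noncomputable def B3 : Set E3 := Metric.ball 0 1

open Classical in
/-- The radial eigenfunction `e_n(x) = sin(nπ|x|)/|x|`, extended by `e_n(0) = nπ`. -/
noncomputable def eFun (n : ℕ) (x : E3) : ℝ :=
  if x = 0 then n * Real.pi else Real.sin (n * Real.pi * ‖x‖) / ‖x‖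

open Set in
lemma eFun_cube_integral_bound (n : ℕ) (hn : 2 ≤ n) :
    (∫ x in B3, |eFun n x| ^ (3 : ℝ)) ≤
      3 * (volume (Metric.ball (0:E3) 1)).toReal * (1/3 + Real.log ((n:ℝ) * π)) := by
  have hn1 : (1:ℝ) ≤ (n:ℝ) := by exact_mod_cast Nat.one_le_of_lt hn
  have hb : (0:ℝ) < (n:ℝ) * π := by positivity
  have hb1 : (1:ℝ) < (n:ℝ) * π := by nlinarith [Real.pi_gt_three]
  set b : ℝ := (n:ℝ) * π with hbdef
  set a : ℝ := b⁻¹ with hadef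
  have ha : 0 < a := inv_pos.2 hb
  have ha1 : a < 1 := inv_lt_one_of_one_lt₀ hb1
  have hainv : a⁻¹ = b := inv_inv b
  -- the radial majorant
  set F : ℝ → ℝ := fun r => if r < 1 then (if r ≤ a then b ^ 3 else (r⁻¹) ^ 3) else 0 with hF
  have hFmeas : Measurable F := by
    apply Measurable.ite measurableSet_Iio
    · exact Measurable.ite measurableSet_Iic measurable_const (measurable_inv.pow_const 3)
    · exact measurable_const
  have hFnonneg : ∀ r, 0 ≤ F r := by
    intro r; rw [hF]; dsimp only; split_ifs with h1 h2
    · positivity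
    · have : 0 < r := lt_trans ha (not_le.1 h2)
      positivity
    · exact le_rfl
  have hFbd : ∀ r : ℝ, F r ≤ b ^ 3 := by
    intro r; rw [hF]; dsimp only
    split_ifs with h1 h2
    · exact le_rfl
    · push_neg at h2
      have hrpos : 0 < r := lt_trans ha h2
      have : r⁻¹ ≤ b := by
        rw [← hainv]; exact inv_anti₀ ha h2.le
      
      exact pow_le_pow_left₀ (by positivity) this 3
    · positivity
  -- pointwise bound
  have hpt : ∀ x : E3, x ∈ B3 → |eFun n x| ^ (3:ℝ) ≤ F ‖x‖ := by
    intro x hx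
    have hx1 : ‖x‖ < 1 := by simpa [B3, Metric.mem_ball, dist_eq_norm] using hx
    have habs : |eFun n x| ^ (3:ℝ) = |eFun n x| ^ (3:ℕ) := by
      rw [show ((3:ℝ)) = ((3:ℕ):ℝ) by norm_num, Real.rpow_natCast]
    rw [habs]
    have key : |eFun n x| ≤ (if ‖x‖ ≤ a then b else ‖x‖⁻¹) := by
      by_cases hx0 : x = 0
      · subst hx0
        have he : eFun n (0:E3) = b := by simp [eFun, hbdef]
        rw [norm_zero, if_pos ha.le, he, abs_of_pos hb]
      · have hr : 0 < ‖x‖ := norm_pos_iff.2 hx0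
        have he : eFun n x = Real.sin ((n:ℝ) * π * ‖x‖) / ‖x‖ := by simp [eFun, hx0]
        rw [he, abs_div, abs_of_pos hr]
        split_ifs with h2
        · calc |Real.sin ((n:ℝ) * π * ‖x‖)| / ‖x‖ ≤ |(n:ℝ) * π * ‖x‖| / ‖x‖ :=
                div_le_div_of_nonneg_right Real.abs_sin_le_abs hr.le
            _ = b := by rw [abs_of_pos (by positivity)]; field_simp; exact hbdef.symm
        · calc |Real.sin ((n:ℝ) * π * ‖x‖)| / ‖x‖ ≤ 1 / ‖x‖ :=
                div_le_div_of_nonneg_right (Real.abs_sin_le_one _) hr.le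
            _ = ‖x‖⁻¹ := one_div _
    have hFx : F ‖x‖ = (if ‖x‖ ≤ a then b else ‖x‖⁻¹) ^ 3 := by
      rw [hF]; dsimp only; rw [if_pos hx1]; split_ifs <;> rfl
    rw [hFx]
    exact pow_le_pow_left₀ (abs_nonneg _) key 3
  -- integrability of the majorant composed with norm
  have hFn_meas : Measurable fun x : E3 => F ‖x‖ := hFmeas.comp measurable_norm
  have hvol_lt : volume (Metric.ball (0:E3) 1) < ⊤ := measure_ball_lt_top
  have hInd : Integrable ((Metric.ball (0:E3) 1).indicator fun _ => b ^ 3) volume := by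
    apply IntegrableOn.integrable_indicator _ measurableSet_ball
    exact integrableOn_const hvol_lt.ne enorm_ne_top
  have hFint : Integrable (fun x : E3 => F ‖x‖) volume := by
    refine hInd.mono' hFn_meas.aestronglyMeasurable (Filter.Eventually.of_forall fun x => ?_)
    rw [Real.norm_eq_abs, abs_of_nonneg (hFnonneg _)]
    by_cases hx1 : ‖x‖ < 1
    · rw [Set.indicator_of_mem (by simpa [Metric.mem_ball, dist_eq_norm] using hx1)]
      exact hFbd _
    · have h0 : F ‖x‖ = 0 := by rw [hF]; dsimp only; rw [if_neg hx1]
      rw [h0]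
      exact Set.indicator_nonneg (fun _ _ => by positivity) _
  -- step 1 : ∫_{B3} |e|³ ≤ ∫ F‖x‖
  have step1 : (∫ x in B3, |eFun n x| ^ (3:ℝ)) ≤ ∫ x : E3, F ‖x‖ := by
    calc (∫ x in B3, |eFun n x| ^ (3:ℝ)) ≤ ∫ x in B3, F ‖x‖ := by
          apply integral_mono_of_nonneg
          · exact Filter.Eventually.of_forall fun x => by positivity
          · exact hFint.integrableOn
          · exact (ae_restrict_iff' measurableSet_ball).2
              (Filter.Eventually.of_forall fun x hx => hpt x hx)
      _ ≤ ∫ x : E3, F ‖x‖ :=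
          setIntegral_le_integral hFint (Filter.Eventually.of_forall fun x => hFnonneg _)
  -- step 2 : polar coordinates
  have hdim : Module.finrank ℝ E3 = 3 := finrank_euclideanSpace_fin
  have step2 : (∫ x : E3, F ‖x‖) =
      3 * ((volume (Metric.ball (0:E3) 1)).toReal * ∫ r in Ioi (0:ℝ), r ^ 2 * F r) := by
    rw [MeasureTheory.integral_fun_norm_addHaar volume F, hdim]
    simp [nsmul_eq_mul, smul_eq_mul, Measure.real_def]
  -- step 3 : compute the radial integral
  have hradial : (∫ r in Ioi (0:ℝ), r ^ 2 * F r) ≤ 1/3 + Real.log b := by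
    have hsplit : EqOn (fun r : ℝ => r ^ 2 * F r)
        (fun r => (Ioc 0 a).indicator (fun r => b ^ 3 * r ^ 2) r
          + (Ioo a 1).indicator (fun r => r⁻¹) r) (Ioi (0:ℝ)) := by
      intro r hr
      have hr0 : 0 < r := hr
      dsimp only
      rw [hF]; dsimp only
      by_cases h1 : r < 1
      · rw [if_pos h1]
        by_cases h2 : r ≤ a
        · rw [Set.indicator_of_mem (Set.mem_Ioc.2 ⟨hr0, h2⟩),
            Set.indicator_of_notMem (by
              intro hmem; rw [Set.mem_Ioo] at hmem; exact absurd h2 (not_le.2 hmem.1)),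
            if_pos h2]
          ring
        · push_neg at h2
          rw [Set.indicator_of_notMem (by
              intro hmem; rw [Set.mem_Ioc] at hmem; exact absurd hmem.2 (not_le.2 h2)),
            Set.indicator_of_mem (Set.mem_Ioo.2 ⟨h2, h1⟩), if_neg (not_le.2 h2)]
          field_simp
          ring
      · push_neg at h1
        rw [Set.indicator_of_notMem (by
            intro hmem; rw [Set.mem_Ioc] at hmem; linarith [hmem.2]),
          Set.indicator_of_notMem (by
            intro hmem; rw [Set.mem_Ioo] at hmem; linarith [hmem.2]),
          if_neg (not_lt.2 h1)]
        ring
    rw [setIntegral_congr_fun measurableSet_Ioi hsplit]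
    have hI1 : Integrable ((Ioc (0:ℝ) a).indicator fun r => b ^ 3 * r ^ 2) volume := by
      apply IntegrableOn.integrable_indicator _ measurableSet_Ioc
      exact (continuous_const.mul (continuous_pow 2)).integrableOn_Ioc
    have hI2 : Integrable ((Ioo a (1:ℝ)).indicator fun r => r⁻¹) volume := by
      apply IntegrableOn.integrable_indicator _ measurableSet_Ioo
      apply IntegrableOn.mono_set (s := Ioo a 1) (t := Icc a 1) _ Set.Ioo_subset_Icc_self
      apply ContinuousOn.integrableOn_compact isCompact_Icc
      exact ContinuousOn.inv₀ continuousOn_id fun x hx => (lt_of_lt_of_le ha hx.1).ne'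
    rw [integral_add (hI1.restrict) (hI2.restrict)]
    have e1 : (∫ r in Ioi (0:ℝ), (Ioc 0 a).indicator (fun r => b ^ 3 * r ^ 2) r) = 1/3 := by
      rw [integral_indicator measurableSet_Ioc, Measure.restrict_restrict measurableSet_Ioc,
        Set.inter_eq_self_of_subset_left Set.Ioc_subset_Ioi_self,
        ← intervalIntegral.integral_of_le ha.le, intervalIntegral.integral_const_mul,
        integral_pow]
      have h3 : b ^ 3 * a ^ 3 = 1 := by
        rw [hadef, ← mul_pow, mul_inv_cancel₀ hb.ne']; norm_num
      norm_num
      linear_combination h3 / 3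
    have e2 : (∫ r in Ioi (0:ℝ), (Ioo a 1).indicator (fun r => r⁻¹) r) = Real.log b := by
      rw [integral_indicator measurableSet_Ioo, Measure.restrict_restrict measurableSet_Ioo,
        Set.inter_eq_self_of_subset_left (fun x hx => hx.1.trans' ha |>.trans_le le_rfl)]
      rw [← integral_Ioc_eq_integral_Ioo, ← intervalIntegral.integral_of_le ha1.le,
        integral_inv_of_pos ha one_pos, one_div, hainv]
    rw [e1, e2]
  -- assemble
  calc (∫ x in B3, |eFun n x| ^ (3:ℝ)) ≤ ∫ x : E3, F ‖x‖ := step1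
    _ = 3 * ((volume (Metric.ball (0:E3) 1)).toReal * ∫ r in Ioi (0:ℝ), r ^ 2 * F r) := step2
    _ ≤ 3 * ((volume (Metric.ball (0:E3) 1)).toReal * (1/3 + Real.log b)) := by
        gcongr
    _ = 3 * (volume (Metric.ball (0:E3) 1)).toReal * (1/3 + Real.log b) := by ring

/-- There is a constant `C` such that `‖e_n‖_{L³(B)} ≤ C (log n)^{1/3}` for all `n ≥ 2`. -/
theorem eigenfunction_L3_bound :
    ∃ C > 0, ∀ n : ℕ, 2 ≤ n →
      (∫ x in B3, |eFun n x| ^ (3 : ℝ)) ^ ((1 : ℝ) / 3) ≤ C * (Real.log n) ^ ((1 : ℝ) / 3) := by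
  set V : ℝ := (volume (Metric.ball (0:E3) 1)).toReal with hV
  have hVpos : 0 < V := ENNReal.toReal_pos
    (Metric.measure_ball_pos volume 0 one_pos).ne' measure_ball_lt_top.ne
  have hlog2 : 0 < Real.log 2 := Real.log_pos one_lt_two
  have hlogpi : 0 < Real.log π := Real.log_pos (by linarith [Real.pi_gt_three])
  set K : ℝ := 3 * V * (1/3 + Real.log π) / Real.log 2 + 3 * V with hK
  have hKpos : 0 < K := by positivity
  refine ⟨K ^ ((1:ℝ)/3), Real.rpow_pos_of_pos hKpos _, fun n hn => ?_⟩
  have hn1 : (1:ℝ) ≤ (n:ℝ) := by exact_mod_cast Nat.one_le_of_lt hn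
  have hn2 : (2:ℝ) ≤ (n:ℝ) := by exact_mod_cast hn
  have hlogn : Real.log 2 ≤ Real.log n := Real.log_le_log two_pos hn2
  have hlogn0 : 0 ≤ Real.log n := le_trans hlog2.le hlogn
  have hlin : 3 * V * (1/3 + Real.log ((n:ℝ) * π)) ≤ K * Real.log n := by
    rw [Real.log_mul (by positivity) Real.pi_ne_zero]
    have h1 : 3 * V * (1/3 + Real.log π) ≤ 3 * V * (1/3 + Real.log π) / Real.log 2 * Real.log n := by
      rw [div_mul_eq_mul_div, le_div_iff₀ hlog2]
      have hc : 0 ≤ 3 * V * (1/3 + Real.log π) := by positivity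
      nlinarith [mul_le_mul_of_nonneg_left hlogn hc]
    nlinarith [hVpos.le, hlogn0]
  have hInt0 : 0 ≤ ∫ x in B3, |eFun n x| ^ (3:ℝ) :=
    setIntegral_nonneg measurableSet_ball fun x _ => Real.rpow_nonneg (abs_nonneg _) _
  have hbound : (∫ x in B3, |eFun n x| ^ (3:ℝ)) ≤ K * Real.log n :=
    le_trans (eFun_cube_integral_bound n hn) hlin
  calc (∫ x in B3, |eFun n x| ^ (3:ℝ)) ^ ((1:ℝ)/3)
      ≤ (K * Real.log n) ^ ((1:ℝ)/3) := Real.rpow_le_rpow hInt0 hbound (by norm_num)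
    _ = K ^ ((1:ℝ)/3) * (Real.log n) ^ ((1:ℝ)/3) := Real.mul_rpow hKpos.le hlogn0
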